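/- arXiv:2407.05260 — 2 statements merged into one kernel-verified Lean document; each statement's English description precedes it below -/
import Mathlib

section
/- For every r ∈ ℝ and every V > 0 there exists p ∈ (0,1) such that p·Φ(r + √(V(1−p)/p)) + (1−p)·Φ(r − √(Vp/(1−p))) < Φ(r). -/
open Real MeasureTheory Set

noncomputable section

def stdNormalCDF (x : ℝ) : ℝ :=
  ∫ t in Set.Iic x, Real.exp (-t ^ 2 / 2) / Real.sqrt (2 * Real.pi)

lemma phi_integrable : Integrable (fun t : ℝ => Real.exp (-t ^ 2 / 2) / Real.sqrt (2 * Real.pi)) := by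
  have h : Integrable (fun t : ℝ => Real.exp (-(1/2:ℝ) * t ^ 2)) :=
    integrable_exp_neg_mul_sq (by norm_num)
  have h2 := h.div_const (Real.sqrt (2 * Real.pi))
  convert h2 using 2 with t
  ring_nf

lemma phi_total : (∫ t : ℝ, Real.exp (-t ^ 2 / 2) / Real.sqrt (2 * Real.pi)) = 1 := by
  have h : (∫ t : ℝ, Real.exp (-(1/2:ℝ) * t ^ 2)) = Real.sqrt (Real.pi / (1/2)) :=
    integral_gaussian (1/2)
  have hs : Real.sqrt (Real.pi / (1/2)) = Real.sqrt (2 * Real.pi) := by norm_num; ring_nf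
  have hpos : 0 < Real.sqrt (2 * Real.pi) := Real.sqrt_pos.2 (by positivity)
  calc (∫ t : ℝ, Real.exp (-t ^ 2 / 2) / Real.sqrt (2 * Real.pi))
      = (∫ t : ℝ, Real.exp (-(1/2:ℝ) * t ^ 2)) / Real.sqrt (2 * Real.pi) := by
        rw [integral_div]; congr 1; congr 1; ext t; ring_nf
    _ = 1 := by rw [h, hs]; field_simp

lemma stdNormalCDF_le_one (x : ℝ) : stdNormalCDF x ≤ 1 := by
  rw [← phi_total]
  exact setIntegral_le_integral phi_integrable
    (Filter.Eventually.of_forall fun t => by positivity)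

lemma stdNormalCDF_nonneg (x : ℝ) : 0 ≤ stdNormalCDF x := by
  apply setIntegral_nonneg measurableSet_Iic
  intro t _; positivity

end

noncomputable section

lemma stdNormalCDF_diff (x b : ℝ) (hb0 : 0 ≤ b) (hb1 : b ≤ 1) :
    stdNormalCDF (x - b) + b * (Real.exp (-(|x| + 1) ^ 2 / 2) / Real.sqrt (2 * Real.pi))
      ≤ stdNormalCDF x := by
  set f : ℝ → ℝ := fun t => Real.exp (-t ^ 2 / 2) / Real.sqrt (2 * Real.pi) with hf
  set c : ℝ := Real.exp (-(|x| + 1) ^ 2 / 2) / Real.sqrt (2 * Real.pi) with hc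
  have hsub : x - b ≤ x := by linarith
  have hdiff : stdNormalCDF x - stdNormalCDF (x - b) = ∫ t in Set.Ioc (x - b) x, f t := by
    rw [stdNormalCDF, stdNormalCDF,
      intervalIntegral.integral_Iic_sub_Iic phi_integrable.integrableOn phi_integrable.integrableOn,
      intervalIntegral.integral_of_le hsub]
  have hpt : ∀ t ∈ Set.Ioc (x - b) x, c ≤ f t := by
    intro t ht
    have h1 : t ≤ |x| := le_trans ht.2 (le_abs_self x)
    have h2 : -(|x| + 1) ≤ t := by
      have := neg_abs_le x
      have := ht.1
      linarith
    have hsq : t ^ 2 ≤ (|x| + 1) ^ 2 := by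
      have habs : |t| ≤ |x| + 1 := abs_le.2 ⟨h2, by linarith⟩
      calc t ^ 2 = |t| ^ 2 := (sq_abs t).symm
        _ ≤ (|x| + 1) ^ 2 := by
            apply pow_le_pow_left₀ (abs_nonneg t) habs
    have hexp : Real.exp (-(|x| + 1) ^ 2 / 2) ≤ Real.exp (-t ^ 2 / 2) :=
      Real.exp_le_exp.2 (by linarith)
    have hspos : (0:ℝ) < Real.sqrt (2 * Real.pi) := Real.sqrt_pos.2 (by positivity)
    exact div_le_div_of_nonneg_right hexp hspos.le
  have hlow : b * c ≤ ∫ t in Set.Ioc (x - b) x, f t := by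
    have hmono : (∫ _t in Set.Ioc (x - b) x, c) ≤ ∫ t in Set.Ioc (x - b) x, f t := by
      apply MeasureTheory.setIntegral_mono_on (MeasureTheory.integrableOn_const ?_)
        phi_integrable.integrableOn measurableSet_Ioc hpt
      rw [Real.volume_Ioc]
      exact ENNReal.ofReal_ne_top
    have hconst : (∫ _t in Set.Ioc (x - b) x, c) = b * c := by
      rw [MeasureTheory.setIntegral_const, measureReal_def, Real.volume_Ioc, ENNReal.toReal_ofReal (by linarith),
        smul_eq_mul]
      ring_nf
    linarith [hconst ▸ hmono]
  linarith

end

noncomputable section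

/-- For every `r ∈ ℝ` and `V > 0` there exists `p ∈ (0,1)` such that
`p·Φ(r + √(V(1−p)/p)) + (1−p)·Φ(r − √(Vp/(1−p))) < Φ(r)`. -/
theorem stmt_3 (r V : ℝ) (hV : 0 < V) :
    ∃ p ∈ Set.Ioo (0 : ℝ) 1,
      p * stdNormalCDF (r + Real.sqrt (V * (1 - p) / p))
        + (1 - p) * stdNormalCDF (r - Real.sqrt (V * p / (1 - p)))
        < stdNormalCDF r := by
  set c : ℝ := Real.exp (-(|r| + 1) ^ 2 / 2) / Real.sqrt (2 * Real.pi) with hc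
  have hcpos : 0 < c := by rw [hc]; positivity
  set p : ℝ := min (min (1/2) (1/(2*V))) (c^2 * V / 8) with hp
  have hp0 : 0 < p := lt_min (lt_min (by norm_num) (by positivity)) (by positivity)
  have hp12 : p ≤ 1/2 := le_trans (min_le_left _ _) (min_le_left _ _)
  have hp2V : p ≤ 1/(2*V) := le_trans (min_le_left _ _) (min_le_right _ _)
  have hpc : p ≤ c^2 * V / 8 := min_le_right _ _
  have hp1 : p < 1 := by linarith
  refine ⟨p, ⟨hp0, hp1⟩, ?_⟩
  set b : ℝ := Real.sqrt (V * p / (1 - p)) with hb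
  have h1p : (0:ℝ) < 1 - p := by linarith
  have hb0 : 0 ≤ b := Real.sqrt_nonneg _
  have hb1 : b ≤ 1 := by
    rw [hb]
    rw [Real.sqrt_le_one, div_le_one h1p]
    have hVp : V * p ≤ 1/2 := by
      calc V * p ≤ V * (1/(2*V)) := mul_le_mul_of_nonneg_left hp2V hV.le
        _ = 1/2 := by field_simp
    linarith
  have hkey : p < (1 - p) * b * c := by
    have h1 : (1-p) * b = Real.sqrt (V * p * (1-p)) := by
      rw [hb, ← Real.sqrt_sq h1p.le, ← Real.sqrt_mul (by positivity)]
      congr 1; field_simp; ring_nf; rw [Real.sq_sqrt (by nlinarith [sq_nonneg (1-p)])]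
    have hsp : Real.sqrt p * Real.sqrt p = p := Real.mul_self_sqrt hp0.le
    have hsppos : 0 < Real.sqrt p := Real.sqrt_pos.2 hp0
    have h3 : Real.sqrt p ≤ c * Real.sqrt (V/8) := by
      calc Real.sqrt p ≤ Real.sqrt (c^2 * (V/8)) :=
            Real.sqrt_le_sqrt (by linarith)
        _ = c * Real.sqrt (V/8) := by
            rw [Real.sqrt_mul (sq_nonneg c), Real.sqrt_sq hcpos.le]
    have h4 : Real.sqrt (V*p/2) = Real.sqrt (V/2) * Real.sqrt p := by
      rw [← Real.sqrt_mul (by positivity)]; congr 1; ring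
    have h5 : 2 * Real.sqrt (V/8) = Real.sqrt (V/2) := by
      rw [show (V/2 : ℝ) = 4 * (V/8) by ring, Real.sqrt_mul (by norm_num : (0:ℝ) ≤ 4),
        show Real.sqrt 4 = 2 by
          rw [show (4:ℝ) = 2^2 by norm_num, Real.sqrt_sq (by norm_num : (0:ℝ) ≤ 2)]]
    have hV8 : 0 < Real.sqrt (V/8) := Real.sqrt_pos.2 (by positivity)
    have h6 : p < c * Real.sqrt (V*p/2) := by
      have h7 := mul_le_mul_of_nonneg_left h3 hsppos.le
      rw [hsp] at h7
      calc p ≤ Real.sqrt p * (c * Real.sqrt (V/8)) := h7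
        _ < c * (Real.sqrt (V/2) * Real.sqrt p) := by nlinarith
        _ = c * Real.sqrt (V*p/2) := by rw [h4]
    have h2 : Real.sqrt (V*p/2) ≤ Real.sqrt (V * p * (1-p)) := by
      apply Real.sqrt_le_sqrt
      nlinarith [mul_pos hV hp0]
    calc p < c * Real.sqrt (V*p/2) := h6
      _ ≤ c * Real.sqrt (V * p * (1-p)) := by nlinarith
      _ = (1-p) * b * c := by rw [← h1]; ring
  have hΦ1 : stdNormalCDF (r + Real.sqrt (V*(1-p)/p)) ≤ 1 := stdNormalCDF_le_one _
  have hΦ0 : 0 ≤ stdNormalCDF r := stdNormalCDF_nonneg r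
  have hdiff := stdNormalCDF_diff r b hb0 hb1
  rw [← hc] at hdiff
  have hm1 := mul_le_mul_of_nonneg_left hΦ1 hp0.le
  have hm2 := mul_le_mul_of_nonneg_left hdiff h1p.le
  nlinarith [hm1, hm2]

end
end

section
/- Let Γ₀ < Γ < Γ*, let P* be any maximizer achieving C(Γ) and Q* := P*W with Q*(b) > 0 for all b. Assume C is differentiable at Γ with derivative λ = C′(Γ) and that λ ≥ 0. Then for every n ≥ 1 and every x = (x₁,…,xₙ) ∈ 𝒜ⁿ with (1/n)Σᵢ c(xᵢ) ≤ Γ, one has Σ_{i=1}^n Σ_{b∈ℬ} W(b|xᵢ)·log(W(b|xᵢ)/Q*(b)) ≤ n·C(Γ) (summands with W(b|xᵢ) = 0 read as 0). -/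
open scoped BigOperators

noncomputable section
namespace Paper

variable {𝒜 ℬ : Type*} [Fintype 𝒜] [Fintype ℬ] [Nonempty 𝒜] [Nonempty ℬ]

/-- `W` is a channel from `𝒜` to `ℬ`. -/
def IsChannel (W : 𝒜 → ℬ → ℝ) : Prop :=
  (∀ a b, 0 ≤ W a b) ∧ ∀ a, ∑ b, W a b = 1

/-- `P` is a probability vector on `𝒜`. -/
def IsProbVec (P : 𝒜 → ℝ) : Prop := (∀ a, 0 ≤ P a) ∧ ∑ a, P a = 1

/-- Average cost `c(P) = Σ_a P(a)c(a)`. -/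
def avgCost (c : 𝒜 → ℝ) (P : 𝒜 → ℝ) : ℝ := ∑ a, P a * c a

/-- Output distribution `PW(b) = Σ_a P(a)W(b|a)`. -/
def outDist (W : 𝒜 → ℬ → ℝ) (P : 𝒜 → ℝ) (b : ℬ) : ℝ := ∑ a, P a * W a b

/-- Mutual information `I(P,W)`; summands with `P(a)W(b|a) = 0` vanish. -/
def mutInfo (W : 𝒜 → ℬ → ℝ) (P : 𝒜 → ℝ) : ℝ :=
  ∑ a, ∑ b, P a * W a b * Real.log (W a b / outDist W P b)

/-- The capacity-cost function `C(Γ)`. -/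
def capacityCost (W : 𝒜 → ℬ → ℝ) (c : 𝒜 → ℝ) (Γ : ℝ) : ℝ :=
  sSup {x : ℝ | ∃ P : 𝒜 → ℝ, IsProbVec P ∧ avgCost c P ≤ Γ ∧ mutInfo W P = x}

/-- The unconstrained capacity `max_P I(P,W)`. -/
def capacity (W : 𝒜 → ℬ → ℝ) : ℝ :=
  sSup {x : ℝ | ∃ P : 𝒜 → ℝ, IsProbVec P ∧ mutInfo W P = x}

/-- `Γ₀ = min_a c(a)`. -/
def Gamma0 (c : 𝒜 → ℝ) : ℝ := ⨅ a, c a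

/-- `Γ* = inf{Γ : C(Γ) = max_P I(P,W)}`. -/
def GammaStar (W : 𝒜 → ℬ → ℝ) (c : 𝒜 → ℝ) : ℝ :=
  sInf {Γ : ℝ | capacityCost W c Γ = capacity W}

/-- `Π*`: the set of capacity-cost-achieving input distributions at cost `Γ`. -/
def capAchievers (W : 𝒜 → ℬ → ℝ) (c : 𝒜 → ℝ) (Γ : ℝ) : Set (𝒜 → ℝ) :=
  {P | IsProbVec P ∧ avgCost c P ≤ Γ ∧ mutInfo W P = capacityCost W c Γ}

/-- `ν_a`: the conditional information variance of input letter `a` w.r.t. output law `Q`. -/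
def nu (W : 𝒜 → ℬ → ℝ) (Q : ℬ → ℝ) (a : 𝒜) : ℝ :=
  ∑ b, W a b * (Real.log (W a b / Q b)) ^ 2
    - (∑ b, W a b * Real.log (W a b / Q b)) ^ 2

/-- ℓ¹ distance between probability vectors. -/
def l1dist (P Q : 𝒜 → ℝ) : ℝ := ∑ a, |P a - Q a|

-- auxiliary lemmas

lemma sum_outDist (W : 𝒜 → ℬ → ℝ) (hW : IsChannel W) (P : 𝒜 → ℝ) (hP : IsProbVec P) :
    ∑ b, outDist W P b = 1 := by
  unfold outDist
  rw [Finset.sum_comm]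
  calc ∑ a, ∑ b, P a * W a b = ∑ a, P a * ∑ b, W a b := by
        simp [Finset.mul_sum]
    _ = 1 := by simp [hW.2, hP.2]

lemma mutInfo_le_card (W : 𝒜 → ℬ → ℝ) (hW : IsChannel W) (P : 𝒜 → ℝ) (hP : IsProbVec P) :
    mutInfo W P ≤ Fintype.card ℬ := by
  unfold mutInfo
  rw [Finset.sum_comm]
  have key : ∀ b, ∑ a, P a * W a b * Real.log (W a b / outDist W P b) ≤ 1 := by
    intro b
    set Q := outDist W P b with hQdef
    have hQ0 : 0 ≤ Q := Finset.sum_nonneg fun a _ => mul_nonneg (hP.1 a) (hW.1 a b)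
    have step : ∀ a, P a * W a b * Real.log (W a b / Q) ≤ P a * W a b / Q := by
      intro a
      by_cases h : P a * W a b = 0
      · rw [h, zero_mul, zero_div]
      · have hPa : 0 < P a := lt_of_le_of_ne (hP.1 a) (by
          intro he; exact h (by rw [← he, zero_mul]))
        have hWab : 0 < W a b := lt_of_le_of_ne (hW.1 a b) (by
          intro he; exact h (by rw [← he, mul_zero]))
        have hQpos : 0 < Q := lt_of_lt_of_le (mul_pos hPa hWab)
          (Finset.single_le_sum (f := fun a' => P a' * W a' b)
            (fun a' _ => mul_nonneg (hP.1 a') (hW.1 a' b)) (Finset.mem_univ a))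
        have hW1 : W a b ≤ 1 := by
          have := Finset.single_le_sum (f := fun b' => W a b')
            (fun b' _ => hW.1 a b') (Finset.mem_univ b)
          rw [hW.2 a] at this; exact this
        have hlog : Real.log (W a b / Q) ≤ W a b / Q :=
          le_trans (Real.log_le_sub_one_of_pos (div_pos hWab hQpos)) (by linarith)
        calc P a * W a b * Real.log (W a b / Q) ≤ P a * W a b * (W a b / Q) :=
              mul_le_mul_of_nonneg_left hlog (le_of_lt (mul_pos hPa hWab))
          _ ≤ P a * W a b / Q := by
              rw [mul_assoc, mul_div_assoc]
              exact mul_le_mul_of_nonneg_left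
                (mul_le_of_le_one_left (div_nonneg hWab.le hQpos.le) hW1) hPa.le
    calc ∑ a, P a * W a b * Real.log (W a b / Q) ≤ ∑ a, P a * W a b / Q :=
          Finset.sum_le_sum fun a _ => step a
      _ = Q / Q := by rw [← Finset.sum_div]; rfl
      _ ≤ 1 := div_self_le_one Q
  calc ∑ b, ∑ a, P a * W a b * Real.log (W a b / outDist W P b)
      ≤ ∑ _b : ℬ, (1:ℝ) := Finset.sum_le_sum fun b _ => key b
    _ = Fintype.card ℬ := by simp

lemma bddAbove_mutInfoSet (W : 𝒜 → ℬ → ℝ) (hW : IsChannel W) (c : 𝒜 → ℝ) (Γ' : ℝ) :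
    BddAbove {x : ℝ | ∃ P : 𝒜 → ℝ, IsProbVec P ∧ avgCost c P ≤ Γ' ∧ mutInfo W P = x} := by
  refine ⟨Fintype.card ℬ, ?_⟩
  rintro x ⟨P, hP, -, rfl⟩
  exact mutInfo_le_card W hW P hP

lemma mutInfo_eq (W : 𝒜 → ℬ → ℝ) (P : 𝒜 → ℝ) (hQ : ∀ b, outDist W P b ≠ 0) :
    mutInfo W P = (∑ a, P a * ∑ b, W a b * Real.log (W a b))
      - ∑ b, outDist W P b * Real.log (outDist W P b) := by
  unfold mutInfo
  have key : ∀ a b, P a * W a b * Real.log (W a b / outDist W P b)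
      = P a * (W a b * Real.log (W a b)) - P a * W a b * Real.log (outDist W P b) := by
    intro a b
    by_cases h : W a b = 0
    · simp [h]
    · rw [Real.log_div h (hQ b)]; ring
  calc ∑ a, ∑ b, P a * W a b * Real.log (W a b / outDist W P b)
      = ∑ a, ∑ b, (P a * (W a b * Real.log (W a b))
          - P a * W a b * Real.log (outDist W P b)) := by
        exact Finset.sum_congr rfl fun a _ => Finset.sum_congr rfl fun b _ => key a b
    _ = (∑ a, ∑ b, P a * (W a b * Real.log (W a b)))
          - ∑ a, ∑ b, P a * W a b * Real.log (outDist W P b) := by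
        rw [← Finset.sum_sub_distrib]
        exact Finset.sum_congr rfl fun a _ => by rw [Finset.sum_sub_distrib]
    _ = (∑ a, P a * ∑ b, W a b * Real.log (W a b))
          - ∑ b, outDist W P b * Real.log (outDist W P b) := by
        congr 1
        · exact Finset.sum_congr rfl fun a _ => by rw [Finset.mul_sum]
        · rw [Finset.sum_comm]
          refine Finset.sum_congr rfl fun b _ => ?_
          rw [outDist, Finset.sum_mul]

lemma deriv_le_of_eventually_le (f g : ℝ → ℝ) (f' g' : ℝ)
    (hf : HasDerivAt f f' 0) (hg : HasDerivAt g g' 0) (h0 : f 0 = g 0)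
    (hle : ∀ᶠ ε in nhdsWithin 0 (Set.Ioi 0), f ε ≤ g ε) : f' ≤ g' := by
  have hsub : Set.Ioi (0:ℝ) ⊆ {(0:ℝ)}ᶜ := fun x hx => ne_of_gt hx
  have htf := (hasDerivAt_iff_tendsto_slope.1 hf).mono_left (nhdsWithin_mono 0 hsub)
  have htg := (hasDerivAt_iff_tendsto_slope.1 hg).mono_left (nhdsWithin_mono 0 hsub)
  refine le_of_tendsto_of_tendsto htf htg ?_
  filter_upwards [hle, self_mem_nhdsWithin] with ε hε hε0
  have hεpos : (0:ℝ) < ε := hε0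
  simp only [slope_def_field, sub_zero]
  rw [div_le_div_iff₀ hεpos hεpos]
  nlinarith

lemma single_letter (W : 𝒜 → ℬ → ℝ) (hW : IsChannel W) (c : 𝒜 → ℝ)
    (Γ : ℝ) (Pstar : 𝒜 → ℝ) (hPstar : IsProbVec Pstar ∧ avgCost c Pstar ≤ Γ ∧
      mutInfo W Pstar = capacityCost W c Γ)
    (hQ : ∀ b, 0 < outDist W Pstar b)
    (lam : ℝ) (hderiv : HasDerivAt (capacityCost W c) lam Γ) (a : 𝒜) :
    ∑ b, W a b * Real.log (W a b / outDist W Pstar b)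
      ≤ capacityCost W c Γ + lam * (c a - Γ) := by
  classical
  obtain ⟨hPv, hPc, hPI⟩ := hPstar
  set Q : ℬ → ℝ := outDist W Pstar with hQdef
  set P : ℝ → 𝒜 → ℝ := fun ε a' => (1 - ε) * Pstar a' + ε * (if a' = a then 1 else 0)
    with hPdef
  set q : ℝ → ℬ → ℝ := fun ε b => (1 - ε) * Q b + ε * W a b with hqdef
  set A : ℝ := ∑ a', Pstar a' * ∑ b, W a' b * Real.log (W a' b) with hA
  set B : ℝ := ∑ b, W a b * Real.log (W a b) with hB
  set φ : ℝ → ℝ := fun ε => mutInfo W (P ε) with hφ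
  set ψ : ℝ → ℝ := fun ε => ((1 - ε) * A + ε * B) - ∑ b, q ε b * Real.log (q ε b) with hψ
  set g : ℝ → ℝ := fun ε => capacityCost W c (Γ + ε * (c a - Γ)) with hg
  -- output distribution of the perturbed input
  have houtP : ∀ ε b, outDist W (P ε) b = q ε b := by
    intro ε b
    simp only [outDist, hPdef, hqdef, add_mul, Finset.sum_add_distrib, mul_assoc,
      ite_mul, one_mul, zero_mul, ← Finset.mul_sum]
    rw [Finset.sum_ite_eq' Finset.univ a (fun a' => W a' b)]
    simp [hQdef, outDist, mul_assoc]
  have hq0 : ∀ b, q 0 b = Q b := by intro b; simp [hqdef]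
  have hP0 : P 0 = Pstar := by funext a'; simp [hPdef]
  -- eventual positivity of q
  have hev : ∀ᶠ ε in nhds (0:ℝ), ∀ b, 0 < q ε b := by
    rw [Filter.eventually_all]
    intro b
    have hc : Continuous (fun ε => q ε b) := by
      simp only [hqdef]; fun_prop
    have := (hc.tendsto 0).eventually (eventually_gt_nhds (by rw [hq0 b] at *; exact hQ b :
      (0:ℝ) < q 0 b))
    simpa using this
  -- φ agrees with ψ near 0
  have hψφ : φ =ᶠ[nhds (0:ℝ)] ψ := by
    filter_upwards [hev] with ε hqpos
    have hQne : ∀ b, outDist W (P ε) b ≠ 0 := by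
      intro b; rw [houtP]; exact (hqpos b).ne'
    rw [hφ, hψ]
    simp only
    rw [mutInfo_eq W (P ε) hQne]
    congr 1
    · simp only [hPdef, add_mul, Finset.sum_add_distrib, mul_assoc, ite_mul, one_mul,
        zero_mul, ← Finset.mul_sum]
      rw [Finset.sum_ite_eq' Finset.univ a (fun a' => ∑ b, W a' b * Real.log (W a' b))]
      simp [hA, hB, mul_assoc]
    · exact Finset.sum_congr rfl fun b _ => by rw [houtP]
  -- derivative of ψ
  have hpart1 : HasDerivAt (fun ε : ℝ => (1 - ε) * A + ε * B) (B - A) 0 := by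
    have h1 : HasDerivAt (fun ε : ℝ => (1 - ε) * A + ε * B) ((-1) * A + 1 * B) 0 :=
      ((((hasDerivAt_id (0:ℝ)).const_sub 1).mul_const A)).add ((hasDerivAt_id (0:ℝ)).mul_const B)
    convert h1 using 1; ring
  have hpart2 : HasDerivAt (fun ε : ℝ => ∑ b, q ε b * Real.log (q ε b))
      (∑ b, (Real.log (Q b) + 1) * (W a b - Q b)) 0 := by
    apply HasDerivAt.fun_sum
    intro b _
    have haff : HasDerivAt (fun ε : ℝ => q ε b) (W a b - Q b) 0 := by
      have h1 : HasDerivAt (fun ε : ℝ => (1 - ε) * Q b + ε * W a b)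
          ((-1) * Q b + 1 * W a b) 0 :=
        ((((hasDerivAt_id (0:ℝ)).const_sub 1).mul_const (Q b))).add
          ((hasDerivAt_id (0:ℝ)).mul_const (W a b))
      convert h1 using 1; ring
    have hml : HasDerivAt (fun t : ℝ => t * Real.log t) (Real.log (Q b) + 1) (q 0 b) := by
      rw [hq0 b]; exact Real.hasDerivAt_mul_log (hQ b).ne'
    exact hml.comp 0 haff
  have hψd : HasDerivAt ψ ((B - A) - ∑ b, (Real.log (Q b) + 1) * (W a b - Q b)) 0 :=
    hpart1.sub hpart2
  have hφd : HasDerivAt φ ((B - A) - ∑ b, (Real.log (Q b) + 1) * (W a b - Q b)) 0 :=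
    hψd.congr_of_eventuallyEq hψφ
  -- identify the derivative value
  have hDval : ∑ b, W a b * Real.log (W a b / Q b) = B - ∑ b, W a b * Real.log (Q b) := by
    rw [hB, ← Finset.sum_sub_distrib]
    refine Finset.sum_congr rfl fun b _ => ?_
    by_cases h : W a b = 0
    · simp [h]
    · rw [Real.log_div h (hQ b).ne']; ring
  have hIval : mutInfo W Pstar = A - ∑ b, Q b * Real.log (Q b) :=
    mutInfo_eq W Pstar fun b => (hQ b).ne'
  have hsum1 : ∑ b, W a b = 1 := hW.2 a
  have hsumQ : ∑ b, Q b = 1 := sum_outDist W hW Pstar hPv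
  have hderval : (B - A) - ∑ b, (Real.log (Q b) + 1) * (W a b - Q b)
      = (∑ b, W a b * Real.log (W a b / Q b)) - mutInfo W Pstar := by
    have hexp : ∀ b, (Real.log (Q b) + 1) * (W a b - Q b)
        = W a b * Real.log (Q b) - Q b * Real.log (Q b) + (W a b - Q b) := fun b => by ring
    rw [hDval, hIval, Finset.sum_congr rfl fun b _ => hexp b, Finset.sum_add_distrib,
      Finset.sum_sub_distrib, Finset.sum_sub_distrib, hsum1, hsumQ]
    ring
  -- derivative of g
  have haff2 : HasDerivAt (fun ε : ℝ => Γ + ε * (c a - Γ)) (c a - Γ) 0 := by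
    have h1 : HasDerivAt (fun ε : ℝ => Γ + ε * (c a - Γ)) (0 + 1 * (c a - Γ)) 0 :=
      (hasDerivAt_const (0:ℝ) Γ).add ((hasDerivAt_id (0:ℝ)).mul_const (c a - Γ))
    convert h1 using 1; ring
  have hgd : HasDerivAt g (lam * (c a - Γ)) 0 := by
    have h' : HasDerivAt (capacityCost W c) lam ((fun ε : ℝ => Γ + ε * (c a - Γ)) 0) := by
      simpa using hderiv
    exact h'.comp 0 haff2
  -- φ 0 = g 0
  have h00 : φ 0 = g 0 := by
    rw [hφ, hg]
    simp only [hP0]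
    rw [hPI]
    norm_num
  -- φ ≤ g on the right of 0
  have hle : ∀ᶠ ε in nhdsWithin (0:ℝ) (Set.Ioi 0), φ ε ≤ g ε := by
    filter_upwards [Ioo_mem_nhdsGT_of_mem (Set.mem_Ico.2 ⟨le_refl (0:ℝ), zero_lt_one⟩)]
      with ε hε
    obtain ⟨hε0, hε1⟩ := hε
    have hPvε : IsProbVec (P ε) := by
      constructor
      · intro a'
        simp only [hPdef]
        have : (0:ℝ) ≤ (if a' = a then (1:ℝ) else 0) := by split_ifs <;> norm_num
        have h1ε : (0:ℝ) ≤ 1 - ε := by linarith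
        exact add_nonneg (mul_nonneg h1ε (hPv.1 a')) (mul_nonneg hε0.le this)
      · simp only [hPdef, Finset.sum_add_distrib, ← Finset.mul_sum, hPv.2]
        rw [Finset.sum_ite_eq' Finset.univ a (fun _ => (1:ℝ))]
        simp
    have hcost : avgCost c (P ε) ≤ Γ + ε * (c a - Γ) := by
      have hav : avgCost c (P ε) = (1 - ε) * avgCost c Pstar + ε * c a := by
        simp only [avgCost, hPdef, add_mul, Finset.sum_add_distrib, mul_assoc, ite_mul,
          one_mul, zero_mul, ← Finset.mul_sum]
        rw [Finset.sum_ite_eq' Finset.univ a (fun a' => c a')]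
        simp [mul_assoc]
      rw [hav]
      have h1ε : (0:ℝ) ≤ 1 - ε := by linarith
      nlinarith
    have hmem : φ ε ∈ {x : ℝ | ∃ P' : 𝒜 → ℝ, IsProbVec P' ∧
        avgCost c P' ≤ Γ + ε * (c a - Γ) ∧ mutInfo W P' = x} := ⟨P ε, hPvε, hcost, rfl⟩
    exact le_csSup (bddAbove_mutInfoSet W hW c _) hmem
  have hfinal := deriv_le_of_eventually_le φ g _ _ hφd hgd h00 hle
  rw [hderval] at hfinal
  rw [hPI] at hfinal
  linarith


/-- If `C` is differentiable at `Γ` with derivative `λ ≥ 0`, then for every `n ≥ 1` and every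
input sequence of average cost at most `Γ`, the total mean information density is at most
`n·C(Γ)`. -/
theorem stmt_8 (W : 𝒜 → ℬ → ℝ) (hW : IsChannel W) (c : 𝒜 → ℝ) (cmax : ℝ)
    (hc : ∀ a, 0 ≤ c a ∧ c a ≤ cmax)
    (Γ : ℝ) (hΓ₁ : Gamma0 c < Γ) (hΓ₂ : Γ < GammaStar W c)
    (Pstar : 𝒜 → ℝ) (hPstar : Pstar ∈ capAchievers W c Γ)
    (hQ : ∀ b, 0 < outDist W Pstar b)
    (lam : ℝ) (hderiv : HasDerivAt (capacityCost W c) lam Γ) (hlam : 0 ≤ lam) :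
    ∀ n : ℕ, 1 ≤ n → ∀ x : Fin n → 𝒜, (∑ i, c (x i)) ≤ n * Γ →
      ∑ i, ∑ b, W (x i) b * Real.log (W (x i) b / outDist W Pstar b)
        ≤ n * capacityCost W c Γ := by
  intro n hn x hx
  have key : ∀ i : Fin n, ∑ b, W (x i) b * Real.log (W (x i) b / outDist W Pstar b)
      ≤ capacityCost W c Γ + lam * (c (x i) - Γ) := fun i =>
    single_letter W hW c Γ Pstar hPstar hQ lam hderiv (x i)
  calc ∑ i, ∑ b, W (x i) b * Real.log (W (x i) b / outDist W Pstar b)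
      ≤ ∑ i : Fin n, (capacityCost W c Γ + lam * (c (x i) - Γ)) :=
        Finset.sum_le_sum fun i _ => key i
    _ = n * capacityCost W c Γ + lam * ((∑ i, c (x i)) - n * Γ) := by
        rw [Finset.sum_add_distrib, Finset.sum_const, Finset.card_univ, Fintype.card_fin,
          ← Finset.mul_sum, Finset.sum_sub_distrib, Finset.sum_const, Finset.card_univ,
          Fintype.card_fin]
        push_cast
        ring
    _ ≤ n * capacityCost W c Γ := by nlinarith [mul_nonneg hlam (sub_nonneg.2 hx)]

end Paper
end
end
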